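/- arXiv:2307.11746 — 6 statements merged into one kernel-verified Lean document; each statement's English description precedes it below -/
import Mathlib

section
/- Let W_• be a power tower on K with all relative degrees finite. Then the sequence of degrees is nonincreasing: [W_0 : W_1] ≥ [W_1 : W_2] ≥ … ≥ [W_{n-1} : W_n] ≥ … . -/
/-- The subfield `K^{p^n}` of `p^n`-th powers of `K`. -/
noncomputable def pfield (K : Type*) [Field K] (p : ℕ) [hp : Fact p.Prime] [CharP K p]
    (n : ℕ) : Subfield K :=
  haveI : ExpChar K p := .prime hp.out
  (iterateFrobenius K p n).fieldRange

/-- The subfield `k = ⋂_{n ≥ 0} K^{p^n}`. -/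
noncomputable def kfield (K : Type*) [Field K] (p : ℕ) [Fact p.Prime] [CharP K p] : Subfield K :=
  ⨅ n : ℕ, pfield K p n

/-- A power tower on `K`: a sequence of subfields with `W j = W i · K^{p^j}` for `j ≤ i`. -/
def IsPowerTower (K : Type*) [Field K] (p : ℕ) [Fact p.Prime] [CharP K p]
    (W : ℕ → Subfield K) : Prop :=
  ∀ ⦃i j : ℕ⦄, j ≤ i → W j = W i ⊔ pfield K p j

/-- The degree `[A : B]` for subfields `B ≤ A` of `K` (computed as `[B ⊔ A : B]`). -/
noncomputable def relrank {K : Type*} [Field K] (B A : Subfield K) : ℕ :=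
  letI := (Subfield.inclusion (le_sup_left : B ≤ B ⊔ A)).toAlgebra
  Module.finrank ↥B ↥(B ⊔ A)

/-- Finiteness of the degree `[A : B]` (as `[B ⊔ A : B]`). -/
def finRel {K : Type*} [Field K] (B A : Subfield K) : Prop :=
  letI := (Subfield.inclusion (le_sup_left : B ≤ B ⊔ A)).toAlgebra
  FiniteDimensional ↥B ↥(B ⊔ A)

open Cardinal Module

set_option maxHeartbeats 1000000
set_option synthInstance.maxHeartbeats 400000

section Bridge

variable {K : Type*} [Field K]

lemma rank_inclusion_eq {B C : Subfield K} (h : B ≤ C) :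
    (letI := (Subfield.inclusion h).toAlgebra; Module.rank ↥B ↥C) = Subfield.relrank B C := by
  letI := (Subfield.inclusion h).toAlgebra
  rw [Subfield.relrank_eq_rank_of_le h]
  exact LinearEquiv.rank_eq
    { toFun := fun x => ⟨x.1, x.2⟩
      invFun := fun x => ⟨x.1, x.2⟩
      map_add' := fun _ _ => rfl
      map_smul' := fun _ _ => rfl
      left_inv := fun _ => rfl
      right_inv := fun _ => rfl }

lemma relrank_eq_toNat (B A : Subfield K) :
    relrank B A = Cardinal.toNat (Subfield.relrank B (B ⊔ A)) := by
  have := rank_inclusion_eq (le_sup_left : B ≤ B ⊔ A)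
  exact congr(Cardinal.toNat $this)

lemma finRel_lt {B A : Subfield K} (h : finRel B A) :
    Subfield.relrank B (B ⊔ A) < ℵ₀ := by
  letI := (Subfield.inclusion (le_sup_left : B ≤ B ⊔ A)).toAlgebra
  haveI : FiniteDimensional ↥B ↥(B ⊔ A) := h
  rw [← rank_inclusion_eq (le_sup_left : B ≤ B ⊔ A)]
  exact Module.rank_lt_aleph0 _ _

/-- Key inequality: if `E' ≤ F` and `E' ≤ E` with `E/E'` finite, then
`[F ⊔ E : F] ≤ [E : E']`. -/
lemma key_relrank_le {E' F E : Subfield K} (h1 : E' ≤ F) (h2 : E' ≤ E)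
    (hfin : Subfield.relrank E' E < ℵ₀) :
    Subfield.relrank F (F ⊔ E) ≤ Subfield.relrank E' E := by
  set F' : IntermediateField ↥E' K := Subfield.extendScalars h1 with hF'
  set E'' : IntermediateField ↥E' K := Subfield.extendScalars h2 with hE''
  have hrE : Subfield.relrank E' E = Module.rank ↥E' ↥E'' :=
    Subfield.relrank_eq_rank_of_le h2
  haveI : FiniteDimensional ↥E' ↥E'' := by
    rw [hrE] at hfin
    exact Module.rank_lt_aleph0_iff.mp hfin
  haveI : Algebra.IsAlgebraic ↥E' ↥E'' := Algebra.IsAlgebraic.of_finite _ _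
  have hbot : (⊥ : IntermediateField ↥F' K).toSubfield = F := by
    rw [IntermediateField.bot_toSubfield]
    ext x
    simp only [RingHom.mem_fieldRange]
    constructor
    · rintro ⟨y, rfl⟩
      exact y.2
    · intro hx
      exact ⟨⟨x, hx⟩, rfl⟩
  have hadj : (IntermediateField.adjoin ↥F' ((E'' : Set K))).toSubfield = F ⊔ E := by
    rw [IntermediateField.adjoin_toSubfield]
    have hr : Set.range (algebraMap ↥F' K) = (F : Set K) := by
      ext x
      constructor
      · rintro ⟨y, rfl⟩
        exact y.2
      · intro hx
        exact ⟨⟨x, hx⟩, rfl⟩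
    rw [hr]
    have : (E'' : Set K) = (E : Set K) := rfl
    rw [this, Subfield.closure_union, Subfield.closure_eq, Subfield.closure_eq]
  have hL : Subfield.relrank F (F ⊔ E) =
      IntermediateField.relrank (⊥ : IntermediateField ↥F' K)
        (IntermediateField.adjoin ↥F' ((E'' : Set K))) := by
    rw [IntermediateField.relrank, hbot, hadj]
  rw [hL, IntermediateField.relrank_bot_left, hrE]
  exact IntermediateField.adjoin_rank_le_of_isAlgebraic_right F' E''

end Bridge

section Tower

variable {K : Type*} [Field K] {p : ℕ} [hp : Fact p.Prime] [CharP K p]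

lemma pfield_map [ExpChar K p] (n : ℕ) :
    (pfield K p n).map (frobenius K p) = pfield K p (n + 1) := by
  ext x
  simp only [pfield, Subfield.mem_map, RingHom.mem_fieldRange, iterateFrobenius_def,
    frobenius_def]
  constructor
  · rintro ⟨y, ⟨z, rfl⟩, rfl⟩
    exact ⟨z, by rw [← pow_mul, pow_succ]⟩
  · rintro ⟨z, rfl⟩
    exact ⟨z ^ p ^ n, ⟨z, rfl⟩, by rw [← pow_mul, pow_succ]⟩

variable {W : ℕ → Subfield K} (hW : IsPowerTower K p W)

include hW

lemma tower_anti {m : ℕ} : W (m + 1) ≤ W m := by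
  rw [hW (Nat.le_succ m)]; exact le_sup_left

lemma pfield_le_tower (m : ℕ) : pfield K p m ≤ W m := by
  conv_rhs => rw [hW (le_refl m)]
  exact le_sup_right

lemma frob_le_self [ExpChar K p] (m : ℕ) : (W m).map (frobenius K p) ≤ W m := by
  rintro x ⟨y, hy, rfl⟩
  rw [frobenius_def]
  exact pow_mem hy p

lemma frob_le_next [ExpChar K p] (m : ℕ) : (W m).map (frobenius K p) ≤ W (m + 1) := by
  rw [hW (Nat.le_succ m), Subfield.map_sup, pfield_map]
  exact sup_le (frob_le_self hW (m + 1)) (pfield_le_tower hW (m + 1))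

lemma sup_frob [ExpChar K p] (n : ℕ) :
    W (n + 2) ⊔ (W n).map (frobenius K p) = W (n + 1) := by
  rw [hW (Nat.le_succ n), Subfield.map_sup, pfield_map, ← sup_assoc,
    sup_eq_left.mpr (frob_le_next hW (n + 1)), ← hW (Nat.le_succ (n + 1))]

end Tower

/-- in a power tower with all relative degrees finite, the degrees
`[W n : W (n+1)]` are nonincreasing in `n`. -/
theorem stmt2 {K : Type*} [Field K] (p : ℕ) [Fact p.Prime] [CharP K p]
    (hfg : ∃ s : Finset K, IntermediateField.adjoin ↥(kfield K p) (s : Set K) = ⊤)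
    (W : ℕ → Subfield K) (hW : IsPowerTower K p W)
    (hfin : ∀ n : ℕ, finRel (W (n + 1)) (W n)) :
    ∀ n : ℕ, relrank (W (n + 2)) (W (n + 1)) ≤ relrank (W (n + 1)) (W n) := by
  haveI : ExpChar K p := .prime ‹Fact p.Prime›.out
  intro n
  set φ := frobenius K p with hφ
  have h01 : W (n + 1) ≤ W n := tower_anti hW
  have h12 : W (n + 2) ≤ W (n + 1) := tower_anti hW
  rw [relrank_eq_toNat, relrank_eq_toNat, sup_eq_right.mpr h12, sup_eq_right.mpr h01]
  have hA : Subfield.relrank (W (n + 1)) (W n) < ℵ₀ := by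
    have := finRel_lt (hfin n)
    rwa [sup_eq_right.mpr h01] at this
  refine Cardinal.toNat_le_toNat ?_ hA
  have hmap : Subfield.relrank ((W (n + 1)).map φ) ((W n).map φ)
      = Subfield.relrank (W (n + 1)) (W n) := Subfield.relrank_map_map _ _ φ
  rw [← hmap]
  have h2 : (W (n + 1)).map φ ≤ (W n).map φ := fun x hx => by
    obtain ⟨y, hy, rfl⟩ := hx
    exact ⟨y, h01 hy, rfl⟩
  have := key_relrank_le (frob_le_next hW (n + 1)) h2 (by rw [hmap]; exact hA)
  rwa [sup_frob hW n] at this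
end

section
/- Let n ≥ 1. There is a bijection between subfields W of K with K^{p^n} ⊆ W ⊆ K of exponent exactly n, and power towers on K of length exactly n; the bijection sends a power tower W_• to W_n, and conversely W to the tower W_i := W · K^{p^i} for i ≤ n and W_i := W for i ≥ n. -/
/-- A power tower has length at most `n` if `W N = W n` for all `N ≥ n`. -/
def LenLE {K : Type*} [Field K] (W : ℕ → Subfield K) (n : ℕ) : Prop :=
  ∀ N : ℕ, n ≤ N → W N = W n

lemma pfield_anti (K : Type*) [Field K] (p : ℕ) [hp : Fact p.Prime] [CharP K p]
    {j i : ℕ} (h : j ≤ i) : pfield K p i ≤ pfield K p j := by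
  haveI : ExpChar K p := .prime hp.out
  rintro x ⟨y, rfl⟩
  refine ⟨y ^ p ^ (i - j), ?_⟩
  simp only [iterateFrobenius_def, ← pow_mul, ← pow_add]
  rw [Nat.sub_add_cancel h]

/-- for `n ≥ 1`, power towers of length exactly `n` biject with subfields of
exponent exactly `n`, via `W_• ↦ W_n`; the inverse sends `W` to the tower
`i ↦ W · K^{p^i}` (constant equal to `W` from `n` on). -/
theorem stmt4 {K : Type*} [Field K] (p : ℕ) [Fact p.Prime] [CharP K p] (n : ℕ) (hn : 1 ≤ n) :
    (∀ T : ℕ → Subfield K,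
        IsPowerTower K p T → LenLE T n → (∀ m < n, ¬ LenLE T m) →
          pfield K p n ≤ T n ∧ ∀ m < n, ¬ pfield K p m ≤ T n) ∧
    (∀ W : Subfield K, pfield K p n ≤ W → (∀ m < n, ¬ pfield K p m ≤ W) →
        (IsPowerTower K p (fun i => W ⊔ pfield K p i) ∧
            LenLE (fun i => W ⊔ pfield K p i) n ∧
            (∀ m < n, ¬ LenLE (fun i => W ⊔ pfield K p i) m) ∧
            W ⊔ pfield K p n = W) ∧
        ∀ T : ℕ → Subfield K,
          IsPowerTower K p T → LenLE T n → (∀ m < n, ¬ LenLE T m) → T n = W →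
            T = fun i => W ⊔ pfield K p i) := by
  constructor
  · intro T hT hlen hmin
    constructor
    · have h := hT (le_refl n)
      rw [h]; exact le_sup_right
    · intro m hm hle
      apply hmin m hm
      intro N hN
      have hTm : T m = T n := by rw [hT hm.le, sup_eq_left.mpr hle]
      rcases le_or_gt n N with h | h
      · rw [hlen N h, ← hTm]
      · rw [hT h.le, sup_eq_left.mpr ((pfield_anti K p hN).trans hle)]
        exact hTm.symm
  · intro W hWn hWm
    have hconst : ∀ i, n ≤ i → W ⊔ pfield K p i = W := fun i hi =>
      sup_eq_left.mpr ((pfield_anti K p hi).trans hWn)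
    refine ⟨⟨?_, ?_, ?_, hconst n le_rfl⟩, ?_⟩
    · intro i j hji
      show W ⊔ pfield K p j = (W ⊔ pfield K p i) ⊔ pfield K p j
      rw [sup_assoc, sup_eq_right.mpr (pfield_anti K p hji)]
    · intro N hN
      show W ⊔ pfield K p N = W ⊔ pfield K p n
      rw [hconst N hN, hconst n le_rfl]
    · intro m hm hle
      apply hWm m hm
      have h2 := hle n hm.le
      simp only at h2
      rw [hconst n le_rfl] at h2
      rw [h2]; exact le_sup_right
    · intro T hT hlen _ hTn
      funext i
      rcases le_or_gt i n with h | h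
      · rw [hT h, hTn]
      · show T i = W ⊔ pfield K p i
        rw [hlen i h.le, hTn, hconst i h.le]
end

section
/- Let K be a field of characteristic p > 0 with K/k finitely generated, k = ⋂_n K^{p^n}, and K ≠ k. Then the K-algebra Diff_k(K) of differential operators on K over k is not finitely generated as a K-algebra. -/
/-- The commutator `[a, D] = a∘D − D∘a` of multiplication by `a` with an operator `D`. -/
def Brk {R A : Type*} [CommSemiring R] [CommRing A] [Algebra R A]
    (a : A) (D : A →ₗ[R] A) : A →ₗ[R] A :=
  (LinearMap.mulLeft R a).comp D - D.comp (LinearMap.mulLeft R a)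

/-- `OrdLE n D`: `D` is a differential operator of order at most `n`, i.e. all iterated
commutators `[a₀,[a₁,…,[aₙ,D]…]]` with `n+1` multiplications vanish. -/
def OrdLE {R A : Type*} [CommSemiring R] [CommRing A] [Algebra R A] :
    ℕ → (A →ₗ[R] A) → Prop
  | 0, D => ∀ a : A, Brk a D = 0
  | n + 1, D => ∀ a : A, OrdLE n (Brk a D)

/-- `D` is a differential operator (of some finite order) on `A` relative to `R`. -/
def IsDiffOp (R A : Type*) [CommSemiring R] [CommRing A] [Algebra R A]
    (D : A →ₗ[R] A) : Prop :=
  ∃ n : ℕ, OrdLE n D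

section BrkLemmas
variable {R A : Type*} [CommSemiring R] [CommRing A] [Algebra R A]

theorem brk_apply (a : A) (D : A →ₗ[R] A) (x : A) :
    Brk a D x = a * D x - D (a * x) := rfl

/-- `Brk` as a bilinear map. -/
def brkL : A →ₗ[R] Module.End R (Module.End R A) where
  toFun a :=
    { toFun := Brk a
      map_add' := fun D E => by ext x; simp only [brk_apply, LinearMap.add_apply, map_add]; ring
      map_smul' := fun r D => by
        ext x
        simp only [brk_apply, LinearMap.smul_apply, RingHom.id_apply, map_smul, smul_sub,
          mul_smul_comm] }
  map_add' a b := by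
    ext D x
    simp only [LinearMap.coe_mk, AddHom.coe_mk, LinearMap.add_apply, brk_apply, add_mul, map_add]
    ring
  map_smul' r a := by
    ext D x
    simp only [LinearMap.coe_mk, AddHom.coe_mk, LinearMap.smul_apply, RingHom.id_apply,
      brk_apply, smul_mul_assoc, map_smul, smul_sub]

theorem brkL_apply (a : A) (D : Module.End R A) : brkL a D = Brk a D := rfl

/-- `Brk a` as left-mult minus right-mult by `mulLeft a` in `End (End A)`. -/
theorem brk_eq_ad (a : A) (D : Module.End R A) :
    Brk a D = (LinearMap.mulLeft R (LinearMap.mulLeft R a)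
      - LinearMap.mulRight R (LinearMap.mulLeft R a)) D := by
  ext x
  simp [brk_apply, Module.End.mul_apply]

theorem brk_iterate_eq (a : A) (t : ℕ) (D : Module.End R A) :
    (Brk a)^[t] D = ((LinearMap.mulLeft R (LinearMap.mulLeft R a)
      - LinearMap.mulRight R (LinearMap.mulLeft R a)) ^ t) D := by
  induction t generalizing D with
  | zero => simp
  | succ t ih =>
    rw [Function.iterate_succ_apply, pow_succ, Module.End.mul_apply, ← brk_eq_ad, ih]

theorem brk_pow_char (p m : ℕ) [Fact p.Prime]
    [CharP (Module.End R (Module.End R A)) p] (a : A) (D : Module.End R A) :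
    (Brk a)^[p ^ m] D = Brk (a ^ p ^ m) D := by
  have h : (LinearMap.mulLeft R (LinearMap.mulLeft R a)
      - LinearMap.mulRight R (LinearMap.mulLeft R a)) ^ p ^ m
      = LinearMap.mulLeft R (LinearMap.mulLeft R a) ^ p ^ m
        - LinearMap.mulRight R (LinearMap.mulLeft R a) ^ p ^ m :=
    sub_pow_char_pow_of_commute (R := Module.End R (Module.End R A)) p m
      (LinearMap.commute_mulLeft_right _ _)
  rw [brk_iterate_eq, h,
    LinearMap.pow_mulLeft, LinearMap.pow_mulRight, LinearMap.pow_mulLeft, ← brk_eq_ad]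


theorem brk_comm (a b : A) (D : A →ₗ[R] A) : Brk a (Brk b D) = Brk b (Brk a D) := by
  ext x
  simp only [brk_apply, map_sub]
  rw [mul_left_comm b a x]
  ring

theorem brk_zero (a : A) : Brk a (0 : A →ₗ[R] A) = 0 := by
  ext x; simp [brk_apply]

theorem brk_iterate_zero (a : A) (t : ℕ) : (Brk a)^[t] (0 : A →ₗ[R] A) = 0 := by
  induction t with
  | zero => rfl
  | succ t ih => rw [Function.iterate_succ_apply', ih, brk_zero]

theorem ordle_iterate {n : ℕ} {D : A →ₗ[R] A} (h : OrdLE n D) (a : A) :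
    (Brk a)^[n + 1] D = 0 := by
  induction n generalizing D with
  | zero => simpa using h a
  | succ n ih =>
    rw [Function.iterate_succ_apply]
    exact ih (h a)

/-- Key lemma: a differential operator of order `< p^m` commutes with `p^m`-th powers. -/
theorem brk_pow_eq_zero_of_ordle (p m : ℕ) [Fact p.Prime]
    [CharP (Module.End R (Module.End R A)) p] {n : ℕ} {D : A →ₗ[R] A}
    (h : OrdLE n D) (hnm : n + 1 ≤ p ^ m) (a : A) : Brk (a ^ p ^ m) D = 0 := by
  rw [← brk_pow_char p m]
  obtain ⟨t, ht⟩ : ∃ t, p ^ m = t + (n + 1) := ⟨p ^ m - (n + 1), by omega⟩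
  rw [ht, Function.iterate_add_apply, ordle_iterate h a, brk_iterate_zero]

/-- Iterated commutator over a list. -/
def bigBrk (l : List A) (D : A →ₗ[R] A) : A →ₗ[R] A := l.foldr Brk D

theorem bigBrk_append (l₁ l₂ : List A) (D : A →ₗ[R] A) :
    bigBrk (l₁ ++ l₂) D = bigBrk l₁ (bigBrk l₂ D) :=
  List.foldr_append

theorem bigBrk_replicate (t : ℕ) (a : A) (D : A →ₗ[R] A) :
    bigBrk (List.replicate t a) D = (Brk a)^[t] D := by
  induction t with
  | zero => rfl
  | succ t ih =>
    rw [List.replicate_succ, Function.iterate_succ_apply']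
    show Brk a (bigBrk (List.replicate t a) D) = _
    rw [ih]

theorem bigBrk_zero (l : List A) : bigBrk l (0 : A →ₗ[R] A) = 0 := by
  induction l with
  | nil => rfl
  | cons a l ih =>
    show Brk a (bigBrk l 0) = 0
    rw [ih, brk_zero]

instance brk_leftComm : LeftCommutative (Brk (R := R) (A := A)) := ⟨brk_comm⟩

theorem bigBrk_perm {l₁ l₂ : List A} (h : l₁.Perm l₂) (D : A →ₗ[R] A) :
    bigBrk l₁ D = bigBrk l₂ D :=
  h.foldr_eq D

theorem ordle_of_bigBrk {n : ℕ} {D : A →ₗ[R] A}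
    (h : ∀ l : List A, l.length = n + 1 → bigBrk l D = 0) : OrdLE n D := by
  induction n generalizing D with
  | zero => exact fun a => h [a] rfl
  | succ n ih =>
    intro a
    refine ih fun l hl => ?_
    have : bigBrk l (Brk a D) = bigBrk (l ++ [a]) D := by
      rw [bigBrk_append]; rfl
    rw [this]
    exact h (l ++ [a]) (by simp [hl])

theorem brk_algebraMap (r : R) (D : A →ₗ[R] A) : Brk (algebraMap R A r) D = 0 := by
  ext x
  simp only [brk_apply, LinearMap.zero_apply, ← Algebra.smul_def, map_smul, sub_self]

end BrkLemmas

/-- Every linear endomorphism of a finite extension killed by `p^m`-th powers is a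
differential operator. -/
theorem isDiffOp_of_fd {F A : Type*} [Field F] [CommRing A] [Nontrivial A] [Algebra F A]
    [FiniteDimensional F A] (p m : ℕ) [Fact p.Prime]
    [CharP (Module.End F (Module.End F A)) p]
    (hq : ∀ a : A, ∃ r : F, algebraMap F A r = a ^ p ^ m) (D : A →ₗ[F] A) :
    ∃ n : ℕ, OrdLE n D := by
  classical
  set q := p ^ m with hqdef
  set d := Module.finrank F A with hd
  let e : Module.Basis (Fin d) F A := Module.finBasis F A
  refine ⟨d * (q - 1), ordle_of_bigBrk fun l hl => ?_⟩
  -- Step 1: iterated brackets of basis elements of length `d*(q-1)+1` vanish.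
  have hgen : ∀ ll : List (Fin d), ll.length = d * (q - 1) + 1 →
      bigBrk (ll.map e) D = 0 := by
    intro ll hll
    have hcount : ∃ i, q ≤ ll.count i := by
      by_contra hc
      push_neg at hc
      have h1 : ∑ i : Fin d, (ll : Multiset (Fin d)).count i
          = Multiset.card (ll : Multiset (Fin d)) :=
        Multiset.sum_count_eq_card fun a _ => Finset.mem_univ a
      simp only [Multiset.coe_count, Multiset.coe_card] at h1
      have h2 : ∑ i : Fin d, ll.count i ≤ ∑ _i : Fin d, (q - 1) :=
        Finset.sum_le_sum fun i _ => by have := hc i; omega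
      have h3 : ∑ _i : Fin d, (q - 1) = d * (q - 1) := by
        rw [Finset.sum_const, smul_eq_mul, Finset.card_univ, Fintype.card_fin]
      omega
    obtain ⟨i, hi⟩ := hcount
    have hsub : List.Sublist (List.replicate q i) ll :=
      (List.replicate_sublist_iff).2 hi
    obtain ⟨l₂, hperm⟩ := hsub.exists_perm_append
    have : bigBrk (ll.map e) D = bigBrk ((l₂ ++ List.replicate q i).map e) D :=
      bigBrk_perm ((hperm.trans List.perm_append_comm).map e) D
    rw [this, List.map_append, bigBrk_append, List.map_replicate, bigBrk_replicate,
      brk_pow_char p m]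
    obtain ⟨r, hr⟩ := hq (e i)
    rw [← hqdef, ← hr, brk_algebraMap, bigBrk_zero]
  -- Step 2: every iterated bracket lies in the span of basis iterated brackets.
  have hspan : ∀ l : List A, bigBrk l D ∈ Submodule.span F
      {E : Module.End F A | ∃ ll : List (Fin d), ll.length = l.length ∧
        E = bigBrk (ll.map e) D} := by
    intro l
    induction l with
    | nil => exact Submodule.subset_span ⟨[], rfl, rfl⟩
    | cons a l ih =>
      have h2 : bigBrk (a :: l) D = brkL a (bigBrk l D) := rfl
      rw [h2]
      have h3 : brkL a (bigBrk l D) ∈ Submodule.map (brkL a) (Submodule.span F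
          {E : Module.End F A | ∃ ll : List (Fin d), ll.length = l.length ∧
            E = bigBrk (ll.map e) D}) := Submodule.mem_map_of_mem ih
      rw [Submodule.map_span] at h3
      refine Submodule.span_le.2 ?_ h3
      rintro _ ⟨E₀, ⟨ll, hlen, rfl⟩, rfl⟩
      have ha : a = ∑ i, e.repr a i • e i := (e.sum_repr a).symm
      have hexp : brkL a (bigBrk (ll.map e) D)
          = ∑ i, e.repr a i • (brkL (e i) (bigBrk (ll.map e) D)) := by
        conv_lhs => rw [ha]
        rw [map_sum]
        simp only [map_smul]
        rw [LinearMap.sum_apply]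
        simp only [LinearMap.smul_apply]
      rw [hexp]
      refine Submodule.sum_mem _ fun i _ => Submodule.smul_mem _ _ (Submodule.subset_span ?_)
      exact ⟨i :: ll, by simp [hlen], rfl⟩
  -- Step 3: combine.
  have h := hspan l
  rw [hl] at h
  have hset : {E : Module.End F A | ∃ ll : List (Fin d), ll.length = d * (q - 1) + 1 ∧
      E = bigBrk (ll.map e) D} ⊆ {0} := by
    rintro _ ⟨ll, hlen, rfl⟩
    exact hgen ll hlen
  have : Submodule.span F {E : Module.End F A | ∃ ll : List (Fin d),
      ll.length = d * (q - 1) + 1 ∧ E = bigBrk (ll.map e) D} ≤ ⊥ := by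
    rw [← Submodule.span_zero_singleton F]
    exact Submodule.span_mono hset
  simpa using this h

section Kpart
variable {K : Type*} [Field K] (p : ℕ) [hp : Fact p.Prime] [CharP K p]

theorem mem_pfield_iff {n : ℕ} {x : K} : x ∈ pfield K p n ↔ ∃ y : K, y ^ p ^ n = x := by
  haveI : ExpChar K p := .prime hp.out
  constructor
  · rintro ⟨y, rfl⟩
    exact ⟨y, (iterateFrobenius_def p n y).symm⟩
  · rintro ⟨y, rfl⟩
    exact ⟨y, iterateFrobenius_def p n y⟩

theorem pfield_antitone {m n : ℕ} (h : m ≤ n) : pfield K p n ≤ pfield K p m := by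
  intro x hx
  obtain ⟨y, rfl⟩ := (mem_pfield_iff p).1 hx
  refine (mem_pfield_iff p).2 ⟨y ^ p ^ (n - m), ?_⟩
  rw [← pow_mul, ← pow_add]
  congr 2
  omega

theorem kfield_le_pfield (n : ℕ) : kfield K p ≤ pfield K p n := iInf_le _ n

theorem pow_mem_pfield (a : K) (n : ℕ) : a ^ p ^ n ∈ pfield K p n :=
  (mem_pfield_iff p).2 ⟨a, rfl⟩

theorem kfield_eq_top_of_surj (hsurj : ∀ x : K, ∃ y : K, y ^ p = x) : kfield K p = ⊤ := by
  have hn : ∀ (n : ℕ) (x : K), ∃ y : K, y ^ p ^ n = x := by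
    intro n
    induction n with
    | zero => exact fun x => ⟨x, by simp⟩
    | succ n ih =>
      intro x
      obtain ⟨z, rfl⟩ := ih x
      obtain ⟨y, rfl⟩ := hsurj z
      exact ⟨y, by rw [← pow_mul, ← pow_succ']⟩
  rw [eq_top_iff]
  intro x _
  refine Subfield.mem_iInf.2 fun n => (mem_pfield_iff p).2 (hn n x)

theorem exists_not_pow (hne : kfield K p ≠ ⊤) : ∃ b : K, b ∉ pfield K p 1 := by
  by_contra hc
  push_neg at hc
  refine hne (kfield_eq_top_of_surj p fun x => ?_)
  obtain ⟨y, hy⟩ := (mem_pfield_iff p).1 (hc x)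
  exact ⟨y, by rw [← hy, pow_one]⟩

theorem exists_mem_not_mem (hne : kfield K p ≠ ⊤) (N : ℕ) :
    ∃ c : K, c ∈ pfield K p N ∧ c ∉ pfield K p (N + 1) := by
  obtain ⟨b, hb⟩ := exists_not_pow p hne
  refine ⟨b ^ p ^ N, pow_mem_pfield p b N, fun hc => ?_⟩
  obtain ⟨y, hy⟩ := (mem_pfield_iff p).1 hc
  haveI : ExpChar K p := .prime hp.out
  have hinj : Function.Injective (iterateFrobenius K p N) := (iterateFrobenius K p N).injective
  have : (y ^ p) ^ p ^ N = b ^ p ^ N := by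
    rw [← hy, ← pow_mul, ← pow_succ']
  have hby : b = y ^ p := by
    apply hinj
    rw [iterateFrobenius_def, iterateFrobenius_def, this]
  exact hb (hby ▸ (mem_pfield_iff p).2 ⟨y, by rw [pow_one]⟩)

variable (K) in
/-- The subring of `W`-linear endomorphisms inside `End_k(K)`. -/
def wlin (k W : Subfield K) : Subring (Module.End ↥k K) where
  carrier := {D | ∀ w ∈ W, ∀ x : K, D (w * x) = w * D x}
  mul_mem' {D E} hD hE w hw x := by
    show D (E (w * x)) = w * D (E x)
    rw [hE w hw x, hD w hw (E x)]
  one_mem' w hw x := rfl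
  add_mem' {D E} hD hE w hw x := by
    show D (w * x) + E (w * x) = w * (D x + E x)
    rw [hD w hw x, hE w hw x, mul_add]
  zero_mem' w hw x := by
    show (0 : K) = w * 0
    rw [mul_zero]
  neg_mem' {D} hD w hw x := by
    show -D (w * x) = w * -D x
    rw [hD w hw x, mul_neg]

/-- Restriction of scalars for endomorphisms, from a larger subfield to a smaller one. -/
def resMap {k W : Subfield K} (h : k ≤ W) (D : K →ₗ[↥W] K) : K →ₗ[↥k] K where
  toFun := D
  map_add' := D.map_add
  map_smul' r x := by
    have h1 : r • x = (⟨(r : K), h r.2⟩ : ↥W) • x := rfl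
    have h2 : r • D x = (⟨(r : K), h r.2⟩ : ↥W) • D x := rfl
    rw [RingHom.id_apply, h1, h2]
    exact map_smul D _ x

theorem resMap_brk {k W : Subfield K} (h : k ≤ W) (a : K) (D : K →ₗ[↥W] K) :
    resMap h (Brk a D) = Brk a (resMap h D) := rfl

theorem ordle_resMap {k W : Subfield K} (h : k ≤ W) {n : ℕ} {D : K →ₗ[↥W] K}
    (hD : OrdLE n D) : OrdLE n (resMap h D) := by
  induction n generalizing D with
  | zero =>
    intro a
    rw [← resMap_brk, hD a]
    ext x
    rfl
  | succ n ih =>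
    intro a
    rw [← resMap_brk]
    exact ih (hD a)

set_option synthInstance.maxHeartbeats 1000000 in
set_option maxHeartbeats 1600000 in
theorem fd_pfield (hfg : ∃ s : Finset K, IntermediateField.adjoin ↥(kfield K p) (s : Set K) = ⊤)
    (m : ℕ) : FiniteDimensional ↥(pfield K p m) K := by
  classical
  obtain ⟨s, hs⟩ := hfg
  set F := ↥(pfield K p m)
  have hint : ∀ x ∈ (↑s : Set K), IsIntegral F x := by
    intro x _
    refine ⟨Polynomial.X ^ p ^ m - Polynomial.C (⟨x ^ p ^ m, pow_mem_pfield p x m⟩ : F), ?_, ?_⟩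
    · exact Polynomial.monic_X_pow_sub_C _ (pow_ne_zero _ hp.out.ne_zero)
    · simp only [Polynomial.eval₂_sub, Polynomial.eval₂_X_pow, Polynomial.eval₂_C]
      exact sub_eq_zero.2 rfl
  haveI : Finite ↥(↑s : Set K) := s.finite_toSet.to_subtype
  haveI hfd := IntermediateField.finiteDimensional_adjoin hint
  have htop : IntermediateField.adjoin F (↑s : Set K) = ⊤ := by
    rw [eq_top_iff]
    intro x hxtop
    have hx : x ∈ IntermediateField.adjoin ↥(kfield K p) (↑s : Set K) := by
      rw [hs]; exact IntermediateField.mem_top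
    clear hxtop
    have halg : ∀ r : ↥(kfield K p), (algebraMap ↥(kfield K p) K r)
        ∈ IntermediateField.adjoin F (↑s : Set K) := by
      intro r
      have hr : (algebraMap ↥(kfield K p) K r : K) ∈ pfield K p m :=
        kfield_le_pfield p m r.2
      exact (IntermediateField.adjoin F (↑s : Set K)).algebraMap_mem ⟨_, hr⟩
    induction hx using IntermediateField.adjoin_induction with
    | mem y hy => exact IntermediateField.subset_adjoin F _ hy
    | algebraMap r => exact halg r
    | add a b _ _ ha hb => exact add_mem ha hb
    | inv a _ ha => exact inv_mem ha
    | mul a b _ _ ha hb => exact mul_mem ha hb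
  exact ((IntermediateField.equivOfEq htop).trans
    IntermediateField.topEquiv).toLinearEquiv.finiteDimensional

theorem mem_wlin {k' W : Subfield K} {D : Module.End ↥k' K} :
    D ∈ wlin K k' W ↔ ∀ w ∈ W, ∀ x : K, D (w * x) = w * D x := Iff.rfl

theorem end_nontrivial (F M : Type*) [Semiring F] [AddCommMonoid M] [Module F M] [Nontrivial M] :
    Nontrivial (Module.End F M) := by
  obtain ⟨x, hx⟩ := exists_ne (0 : M)
  exact ⟨1, 0, fun hh => hx (by simpa using LinearMap.ext_iff.1 hh x)⟩

end Kpart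

set_option synthInstance.maxHeartbeats 1000000
set_option maxHeartbeats 3000000

/-- if `K ≠ k` (`k = ⋂ K^{p^n}`, `K/k` finitely generated), the `K`-algebra
`Diff_k(K)` of differential operators is not finitely generated as a `K`-algebra: there is
no finite set `s` such that the subring of `End_k(K)` generated by the multiplication
operators `a • id` (`a ∈ K`) together with `s` is exactly the set of differential
operators. -/
theorem stmt7 {K : Type*} [Field K] (p : ℕ) [Fact p.Prime] [CharP K p]
    (hfg : ∃ s : Finset K, IntermediateField.adjoin ↥(kfield K p) (s : Set K) = ⊤)
    (hne : kfield K p ≠ ⊤) :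
    ¬ ∃ s : Finset (Module.End ↥(kfield K p) K),
        {D : Module.End ↥(kfield K p) K | IsDiffOp ↥(kfield K p) K D} =
          (Subring.closure
            ((Set.range fun a : K => a • (1 : Module.End ↥(kfield K p) K)) ∪ ↑s) :
              Set (Module.End ↥(kfield K p) K)) := by
  classical
  rintro ⟨t, hEq⟩
  haveI hcharR : CharP ↥(kfield K p) p :=
    RingHom.charP (Subfield.subtype _) (RingHom.injective _) p
  haveI hnt1 : Nontrivial (Module.End ↥(kfield K p) K) := end_nontrivial _ _
  haveI hnt2 : Nontrivial (Module.End ↥(kfield K p) (Module.End ↥(kfield K p) K)) :=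
    end_nontrivial _ _
  haveI hch : CharP (Module.End ↥(kfield K p) (Module.End ↥(kfield K p) K)) p :=
    charP_of_injective_algebraMap' ↥(kfield K p) p
  -- each generator is linear over some `K^{p^m}`
  have hmem : ∀ D : {D // D ∈ t}, ∃ m, D.1 ∈ wlin K (kfield K p) (pfield K p m) := by
    rintro ⟨D, hD⟩
    have h1 : D ∈ (Subring.closure
        ((Set.range fun a : K => a • (1 : Module.End ↥(kfield K p) K)) ∪ ↑t) :
          Set (Module.End ↥(kfield K p) K)) :=
      Subring.subset_closure (Set.mem_union_right _ (Finset.mem_coe.2 hD))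
    rw [← hEq] at h1
    obtain ⟨n, hn⟩ := h1
    refine ⟨n + 1, mem_wlin.2 fun w hw x => ?_⟩
    obtain ⟨y, rfl⟩ := (mem_pfield_iff p).1 hw
    have hbound : n + 1 ≤ p ^ (n + 1) :=
      (Nat.lt_two_pow_self (n := n + 1)).le.trans (Nat.pow_le_pow_left (Fact.out : p.Prime).two_le (n + 1))
    have hord : Brk (y ^ p ^ (n + 1)) D = 0 :=
      brk_pow_eq_zero_of_ordle p (n + 1) hn hbound y
    have h2 := LinearMap.ext_iff.1 hord x
    rw [brk_apply, LinearMap.zero_apply] at h2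
    exact (sub_eq_zero.1 h2).symm
  choose f hf using hmem
  set N := t.attach.sup f with hN
  have ht_wlin : ∀ D ∈ t, D ∈ wlin K (kfield K p) (pfield K p N) := by
    intro D hD
    refine mem_wlin.2 fun w hw x => ?_
    exact mem_wlin.1 (hf ⟨D, hD⟩) w
      (pfield_antitone p (Finset.le_sup (t.mem_attach ⟨D, hD⟩)) hw) x
  have hclos : (Subring.closure
      ((Set.range fun a : K => a • (1 : Module.End ↥(kfield K p) K)) ∪ ↑t)) ≤
      wlin K (kfield K p) (pfield K p N) := by
    refine Subring.closure_le.2 ?_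
    rintro D (⟨a, rfl⟩ | hD)
    · refine mem_wlin.2 fun w hw x => ?_
      simp only [LinearMap.smul_apply, Module.End.one_apply, smul_eq_mul]
      rw [mul_left_comm]
    · exact ht_wlin D hD
  obtain ⟨c, hcN, hcN1⟩ := exists_mem_not_mem p hne N
  haveI hfd : FiniteDimensional ↥(pfield K p (N + 1)) K := fd_pfield p hfg (N + 1)
  set F := ↥(pfield K p (N + 1)) with hF
  have hcNotSpan : c ∉ Submodule.span F {(1 : K)} := by
    intro hc
    obtain ⟨r, hr⟩ := Submodule.mem_span_singleton.1 hc
    apply hcN1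
    rw [← hr, Algebra.smul_def, mul_one]
    exact r.2
  set U := Submodule.span F {(1 : K)} with hU
  have hc0 : (Submodule.Quotient.mk c : K ⧸ U) ≠ 0 :=
    fun h => hcNotSpan ((Submodule.Quotient.mk_eq_zero U).1 h)
  have hphi : ∃ φ : Module.Dual F (K ⧸ U), φ (Submodule.Quotient.mk c) ≠ 0 := by
    by_contra hall
    push_neg at hall
    exact hc0 ((Module.forall_dual_apply_eq_zero_iff F _).1 hall)
  obtain ⟨φ, hφ⟩ := hphi
  set D' : K →ₗ[F] K := (Algebra.linearMap F K).comp (φ.comp U.mkQ) with hD'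
  have hD'c : D' c ≠ 0 := by
    simp only [hD', LinearMap.comp_apply, Submodule.mkQ_apply, Algebra.linearMap_apply]
    exact fun h => hφ ((algebraMap F K).injective (by rw [h, map_zero]))
  have hD'1 : D' 1 = 0 := by
    have h1U : (1 : K) ∈ U := Submodule.mem_span_singleton_self 1
    simp only [hD', LinearMap.comp_apply, Submodule.mkQ_apply]
    rw [(Submodule.Quotient.mk_eq_zero U).2 h1U, map_zero, map_zero]
  have hstep : kfield K p ≤ pfield K p (N + 1) := kfield_le_pfield p (N + 1)
  set D₀ := resMap hstep D' with hD₀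
  have hDiff : IsDiffOp ↥(kfield K p) K D₀ := by
    haveI : CharP F p := RingHom.charP (Subfield.subtype _) (RingHom.injective _) p
    haveI : Nontrivial (Module.End F K) := end_nontrivial _ _
    haveI : Nontrivial (Module.End F (Module.End F K)) := end_nontrivial _ _
    haveI : CharP (Module.End F (Module.End F K)) p :=
      charP_of_injective_algebraMap' F p
    obtain ⟨n, hn⟩ := isDiffOp_of_fd p (N + 1)
      (fun a => ⟨⟨a ^ p ^ (N + 1), pow_mem_pfield p a (N + 1)⟩, rfl⟩) D'
    exact ⟨n, ordle_resMap hstep hn⟩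
  have hD₀mem : D₀ ∈ wlin K (kfield K p) (pfield K p N) := by
    have h3 : D₀ ∈ {D : Module.End ↥(kfield K p) K | IsDiffOp ↥(kfield K p) K D} := hDiff
    rw [hEq] at h3
    exact hclos h3
  have h4 := mem_wlin.1 hD₀mem c hcN 1
  rw [mul_one] at h4
  apply hD'c
  have h5 : D' c = c * D' 1 := h4
  rw [hD'1, mul_zero] at h5
  exact h5
end

section
/- Let K be a field of characteristic p > 0 and W ⊆ K a subfield. Setting W_n := W · K^{p^n}, one has (W^s)_n = W_n for all n, where W^s is the separable closure of W in K. Consequently each W_n is separably closed in K. -/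
/-- The separable closure of a subfield `W` inside `K`, as a subfield of `K`. -/
noncomputable def sepCl {K : Type*} [Field K] (W : Subfield K) : Subfield K :=
  (separableClosure ↥W K).toSubfield

lemma pow_mem_pfield_s12 {K : Type*} [Field K] (p : ℕ) [hp : Fact p.Prime] [CharP K p]
    (n : ℕ) (x : K) : x ^ p ^ n ∈ pfield K p n := by
  haveI : ExpChar K p := .prime hp.out
  exact ⟨x, by simp [iterateFrobenius_def]⟩

lemma purelyInsep_of_pfield_le {K : Type*} [Field K] (p : ℕ) [hp : Fact p.Prime] [CharP K p]
    {n : ℕ} {F : Subfield K} (h : pfield K p n ≤ F) : IsPurelyInseparable ↥F K := by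
  haveI : ExpChar ↥F p := .prime (by
    haveI : CharP ↥F p := CharP.subring K p F.toSubring
    exact hp.out)
  refine (isPurelyInseparable_iff_pow_mem ↥F p).2 fun x ↦ ⟨n, ?_⟩
  exact ⟨⟨x ^ p ^ n, h (pow_mem_pfield_s12 p n x)⟩, rfl⟩

lemma sepCl_eq_self_of_pfield_le {K : Type*} [Field K] (p : ℕ) [Fact p.Prime] [CharP K p]
    {n : ℕ} {F : Subfield K} (h : pfield K p n ≤ F) : sepCl F = F := by
  haveI := purelyInsep_of_pfield_le p h
  unfold sepCl
  rw [separableClosure.eq_bot_of_isPurelyInseparable, IntermediateField.bot_toSubfield]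
  exact Subfield.fieldRange_subtype F  -- RingHom.fieldRange (algebraMap ↥F K) vs subtype?

lemma le_sepCl {K : Type*} [Field K] (W : Subfield K) : W ≤ sepCl W := fun x hx ↦ by
  have : (⊥ : IntermediateField ↥W K) ≤ separableClosure ↥W K := bot_le
  have hx' : x ∈ (⊥ : IntermediateField ↥W K) := by
    rw [IntermediateField.mem_bot]; exact ⟨⟨x, hx⟩, rfl⟩
  exact this hx'

/-- with `W^s` the separable closure of `W` in `K`, one has
`W^s · K^{p^n} = W · K^{p^n}` for all `n`; consequently each `W · K^{p^n}` is separably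
closed in `K`. -/
theorem stmt12 {K : Type*} [Field K] (p : ℕ) [Fact p.Prime] [CharP K p]
    (hfg : ∃ s : Finset K, IntermediateField.adjoin ↥(kfield K p) (s : Set K) = ⊤)
    (W : Subfield K) :
    ∀ n : ℕ, sepCl W ⊔ pfield K p n = W ⊔ pfield K p n ∧
      sepCl (W ⊔ pfield K p n) = W ⊔ pfield K p n := by
  intro n
  have hWle : W ≤ W ⊔ pfield K p n := le_sup_left
  have hple : pfield K p n ≤ W ⊔ pfield K p n := le_sup_right
  have hsep : sepCl (W ⊔ pfield K p n) = W ⊔ pfield K p n := sepCl_eq_self_of_pfield_le p hple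
  refine ⟨le_antisymm (sup_le ?_ hple) (sup_le_sup_right (le_sepCl W) _), hsep⟩
  -- sepCl W ≤ W ⊔ pfield
  intro x hx
  letI := (Subfield.inclusion hWle).toAlgebra
  haveI : IsScalarTower ↥W ↥(W ⊔ pfield K p n) K :=
    IsScalarTower.of_algebraMap_eq fun y ↦ rfl
  have hs : IsSeparable ↥W x := hx
  have hs' : IsSeparable ↥(W ⊔ pfield K p n) x := IsSeparable.tower_top _ hs
  have : x ∈ separableClosure ↥(W ⊔ pfield K p n) K := hs'
  have h2 := hsep
  unfold sepCl at h2
  rw [← h2]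
  exact this
end

section
/- Let K be a field of characteristic p > 0 with [K : K^p] finite. Let W_1 be a subfield with K^p ⊆ W_1 ⊊ K. Then there exists a subfield W_2 with K^{p^2} ⊆ W_2 ⊆ W_1 such that W_2 · K^p = W_1 and [W_1 : W_2] = [K : W_1]. (Every 1-foliation on K extends to a 2-foliation.) -/
open Polynomial

set_option synthInstance.maxHeartbeats 1000000
set_option maxHeartbeats 1000000

/-- If `b ∉ F` but `b ^ p ∈ F`, then adjoining `b` to `F` gives degree `p`. -/
lemma deg_adjoin {K : Type*} [Field K] {p : ℕ} (hp : p.Prime) [CharP K p]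
    {F : Subfield K} {b : K} (hb : b ∉ F) (hbp : b ^ p ∈ F) :
    Subfield.relfinrank F (F ⊔ Subfield.closure {b}) = p := by
  have hle : F ≤ F ⊔ Subfield.closure {b} := le_sup_left
  -- the intermediate field F(b)
  have hEsub : (IntermediateField.adjoin ↥F {b}).toSubfield = F ⊔ Subfield.closure {b} := by
    rw [IntermediateField.adjoin_toSubfield, Subfield.closure_union]
    congr 1
    · rw [show Set.range (algebraMap ↥F K) = (F : Set K) from Subtype.range_coe]
      exact F.closure_eq
  set c : ↥F := ⟨b ^ p, hbp⟩ with hc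
  have hroot : (aeval b) ((X : Polynomial F) ^ p - C c) = 0 := by
    simp only [map_sub, map_pow, aeval_X, aeval_C]
    exact sub_eq_zero_of_eq rfl
  have hmonic : ((X : Polynomial F) ^ p - C c).Monic := monic_X_pow_sub_C _ hp.ne_zero
  have hint : IsIntegral ↥F b := ⟨X ^ p - C c, hmonic, hroot⟩
  haveI : ExpChar K p := .prime hp
  have hirr : Irreducible ((X : Polynomial F) ^ p - C c) := by
    refine X_pow_sub_C_irreducible_of_prime hp fun y hy => hb ?_
    have : (y : K) ^ p = b ^ p := congrArg Subtype.val hy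
    have : (y : K) = b := by
      have := frobenius_inj K p
      exact this (by simpa [frobenius_def] using ‹(y : K) ^ p = b ^ p›)
    exact this ▸ y.2
  have hmin : minpoly ↥F b = (X : Polynomial F) ^ p - C c :=
    (minpoly.eq_of_irreducible_of_monic hirr hroot hmonic).symm
  have hdeg : Module.finrank ↥F ↥(IntermediateField.adjoin ↥F {b}) = p := by
    have := IntermediateField.adjoin.finrank hint
    rw [hmin, natDegree_X_pow_sub_C] at this
    simpa [IntermediateField.adjoin_simple_eq_bot_iff] using this
  rw [Subfield.relfinrank_eq_finrank_of_le hle]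
  have hE : Subfield.extendScalars hle = IntermediateField.adjoin ↥F {b} := by
    apply IntermediateField.toSubfield_injective
    rw [hEsub, Subfield.extendScalars_toSubfield]
  rw [hE, hdeg]



/-- Core induction: transport a generating tower below. -/
lemma core_lemma {K : Type*} [Field K] {p : ℕ} (hp : p.Prime) [CharP K p] :
    ∀ n : ℕ, ∀ F W G : Subfield K, Subfield.relfinrank F W = n → n ≠ 0 → F ≤ W → G ≤ F →
      (∀ x ∈ W, x ^ p ∈ G) →
      ∃ V : Subfield K, G ≤ V ∧ V ≤ W ∧ V ⊔ F = W ∧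
        Subfield.relfinrank G V = Subfield.relfinrank F W := by
  intro n
  induction n using Nat.strong_induction_on with
  | _ n IH =>
    intro F W G hn hn0 hFW hGF hpow
    by_cases hWF : W ≤ F
    · refine ⟨G, le_rfl, hGF.trans hFW, ?_, ?_⟩
      · rw [sup_eq_right.mpr hGF, le_antisymm hFW hWF]
      · rw [le_antisymm hFW hWF, Subfield.relfinrank_self, Subfield.relfinrank_self]
    · obtain ⟨b, hbW, hbF⟩ : ∃ b, b ∈ W ∧ b ∉ F := by
        by_contra h
        push_neg at h
        exact hWF h
      have hbG : b ∉ G := fun h => hbF (hGF h)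
      have hbpG : b ^ p ∈ G := hpow b hbW
      have hbpF : b ^ p ∈ F := hGF hbpG
      set F' := F ⊔ Subfield.closure {b} with hF'
      set G' := G ⊔ Subfield.closure {b} with hG'
      have hdF : Subfield.relfinrank F F' = p := deg_adjoin hp hbF hbpF
      have hdG : Subfield.relfinrank G G' = p := deg_adjoin hp hbG hbpG
      have hF'W : F' ≤ W := sup_le hFW (by rwa [Subfield.closure_le, Set.singleton_subset_iff])
      have hG'F' : G' ≤ F' := sup_le_sup_right hGF _
      have htow : Subfield.relfinrank F F' * Subfield.relfinrank F' W = Subfield.relfinrank F W :=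
        Subfield.relfinrank_mul_relfinrank le_sup_left hF'W
      set m := Subfield.relfinrank F' W with hm
      have hpm : p * m = n := by rw [← hn, ← htow, hdF]
      have hm0 : m ≠ 0 := by intro h; rw [h, mul_zero] at hpm; exact hn0 hpm.symm
      have hmn : m < n := by
        have h2 : 2 * m ≤ p * m := Nat.mul_le_mul_right m hp.two_le
        omega
      obtain ⟨V, hGV, hVW, hVF', hVrank⟩ :=
        IH m hmn F' W G' rfl hm0 hF'W hG'F' (fun x hx => (le_sup_left : G ≤ G ⊔ Subfield.closure {b}) (hpow x hx))
      refine ⟨V, le_trans le_sup_left hGV, hVW, ?_, ?_⟩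
      · have hclV : Subfield.closure {b} ≤ V := le_trans le_sup_right hGV
        refine le_antisymm (sup_le hVW hFW) ?_
        rw [← hVF']
        exact sup_le le_sup_left (sup_le le_sup_right (hclV.trans le_sup_left))
      · have : Subfield.relfinrank G G' * Subfield.relfinrank G' V = Subfield.relfinrank G V :=
          Subfield.relfinrank_mul_relfinrank le_sup_left hGV
        rw [← this, hdG, hVrank, ← htow, hdF]

lemma relrank_eq_relfinrank {K : Type*} [Field K] (B A : Subfield K) :
    relrank B A = Subfield.relfinrank B (B ⊔ A) := by
  rw [Subfield.relfinrank_eq_finrank_of_le (le_sup_left : B ≤ B ⊔ A)]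
  rfl

/-- if `[K : K^p]` is finite and `K^p ⊆ W₁ ⊊ K`, then there is a subfield
`W₂` with `K^{p²} ⊆ W₂ ⊆ W₁`, `W₂ · K^p = W₁` and `[W₁ : W₂] = [K : W₁]`: every
1-foliation on `K` extends to a 2-foliation. -/
theorem stmt16 {K : Type*} [Field K] (p : ℕ) [Fact p.Prime] [CharP K p]
    (hfin : finRel (pfield K p 1) ⊤)
    (W1 : Subfield K) (h1 : pfield K p 1 ≤ W1) (hne : W1 ≠ ⊤) :
    ∃ W2 : Subfield K, pfield K p 2 ≤ W2 ∧ W2 ≤ W1 ∧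
      W2 ⊔ pfield K p 1 = W1 ∧ relrank W2 W1 = relrank W1 ⊤ := by
  have hp : p.Prime := Fact.out
  haveI : ExpChar K p := .prime hp
  set φ := frobenius K p with hφ
  set Kp := pfield K p 1 with hKpdef
  have hKp : Kp = φ.fieldRange := by
    rw [hKpdef]; unfold pfield; rw [iterateFrobenius_one]
  -- finiteness
  have h0 : Subfield.relfinrank Kp (Kp ⊔ ⊤) ≠ 0 := by
    rw [Subfield.relfinrank_eq_finrank_of_le (le_sup_left : Kp ≤ Kp ⊔ ⊤)]
    haveI : FiniteDimensional ↥Kp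
        ↥(Subfield.extendScalars (le_sup_left : Kp ≤ Kp ⊔ ⊤)) := hfin
    exact Module.finrank_pos.ne'
  rw [sup_top_eq] at h0
  have htow : Subfield.relfinrank Kp W1 * Subfield.relfinrank W1 ⊤ =
      Subfield.relfinrank Kp ⊤ := Subfield.relfinrank_mul_relfinrank h1 le_top
  have hb0 : Subfield.relfinrank Kp W1 ≠ 0 := by
    intro h; rw [h, zero_mul] at htow; exact h0 htow.symm
  -- the Frobenius image of W1
  set φW1 := W1.map φ with hφW1
  have hφW1Kp : φW1 ≤ Kp := by
    rw [hKp, RingHom.fieldRange_eq_map]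
    exact (Subfield.gc_map_comap φ).monotone_l le_top
  have hmapmap : Subfield.relfinrank φW1 Kp = Subfield.relfinrank W1 ⊤ := by
    rw [hKp, RingHom.fieldRange_eq_map]
    exact Subfield.relfinrank_map_map W1 ⊤ φ
  have hpow : ∀ x ∈ W1, x ^ p ∈ φW1 := fun x hx => ⟨x, hx, (frobenius_def p x)⟩
  obtain ⟨V, hGV, hVW1, hVsup, hVr⟩ :=
    core_lemma hp (Subfield.relfinrank Kp W1) Kp W1 φW1 rfl hb0 h1 hφW1Kp hpow
  have hp2 : pfield K p 2 ≤ V := by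
    refine le_trans ?_ hGV
    intro x hx
    obtain ⟨y, rfl⟩ := RingHom.mem_fieldRange.mp hx
    refine ⟨y ^ p, h1 ⟨y, ?_⟩, ?_⟩
    · rw [iterateFrobenius_def, pow_one]
    · rw [hφ, frobenius_def, iterateFrobenius_def, ← pow_mul, pow_succ, pow_one]
  refine ⟨V, hp2, hVW1, hVsup, ?_⟩
  -- rank computation
  have t1 : Subfield.relfinrank φW1 V * Subfield.relfinrank V W1 =
      Subfield.relfinrank φW1 W1 := Subfield.relfinrank_mul_relfinrank hGV hVW1
  have t2 : Subfield.relfinrank φW1 Kp * Subfield.relfinrank Kp W1 =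
      Subfield.relfinrank φW1 W1 := Subfield.relfinrank_mul_relfinrank hφW1Kp h1
  rw [hVr] at t1
  rw [hmapmap] at t2
  have hfinal : Subfield.relfinrank V W1 = Subfield.relfinrank W1 ⊤ := by
    have := t1.trans t2.symm
    rw [mul_comm (Subfield.relfinrank W1 ⊤) _] at this
    exact Nat.eq_of_mul_eq_mul_left (Nat.pos_of_ne_zero hb0) this
  rw [relrank_eq_relfinrank, relrank_eq_relfinrank, sup_eq_right.mpr hVW1, sup_top_eq]
  exact hfinal
end

section
/- Let k be a perfect field of characteristic p > 0, K = k(x,y), and A_1, A_2, … ∈ k. Define W_n := k(x + A_1 y^p + A_2 y^{p^2} + … + A_{n-1} y^{p^{n-1}}, y^{p^n}) for n ≥ 1 and W_0 = K. Then W_• is a power tower on K with [W_{n-1} : W_n] = p for every n ≥ 1, i.e. an ∞-foliation of rank 1. -/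
set_option maxHeartbeats 1000000
set_option synthInstance.maxHeartbeats 1000000


section Aux
open MvPolynomial in
lemma key_expand {R : Type*} [CommSemiring R] (m : ℕ) (q : MvPolynomial (Fin 2) R) :
    (finSuccEquiv R 1) ((bind₁ ![X 0 ^ m, X 1]) q) =
      Polynomial.expand (MvPolynomial (Fin 1) R) m ((finSuccEquiv R 1) q) := by
  have e1 : (finSuccEquiv R 1) (X 1) = Polynomial.C (X 0) :=
    finSuccEquiv_X_succ (R := R) (n := 1) (j := 0)
  have h : ((finSuccEquiv R 1 : MvPolynomial (Fin 2) R →+* Polynomial (MvPolynomial (Fin 1) R)).comp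
      ((bind₁ ![X 0 ^ m, X 1] : MvPolynomial (Fin 2) R →ₐ[R] MvPolynomial (Fin 2) R) :
        MvPolynomial (Fin 2) R →+* MvPolynomial (Fin 2) R)) =
      ((Polynomial.expand (MvPolynomial (Fin 1) R) m : Polynomial (MvPolynomial (Fin 1) R) →ₐ[MvPolynomial (Fin 1) R] Polynomial (MvPolynomial (Fin 1) R)) :
        Polynomial (MvPolynomial (Fin 1) R) →+* Polynomial (MvPolynomial (Fin 1) R)).comp
        (finSuccEquiv R 1 : MvPolynomial (Fin 2) R →+* Polynomial (MvPolynomial (Fin 1) R)) := by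
    apply MvPolynomial.ringHom_ext
    · intro r
      simp [finSuccEquiv_apply]
    · intro i
      refine Fin.cases ?_ ?_ i
      · simp [finSuccEquiv_X_zero, Polynomial.expand_X]
      · intro j
        have hj : j = 0 := Subsingleton.elim _ _
        subst hj
        simp [e1, Polynomial.expand_C]
  exact RingHom.congr_fun h q

open MvPolynomial in
lemma bind1_pow_injective {R : Type*} [CommRing R] [IsDomain R] {m : ℕ} (hm : 0 < m) :
    Function.Injective (bind₁ (![X 0 ^ m, X 1] : Fin 2 → MvPolynomial (Fin 2) R)) := by
  intro a b hab
  have : (finSuccEquiv R 1) ((bind₁ (![X 0 ^ m, X 1] : Fin 2 → MvPolynomial (Fin 2) R)) a)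
      = (finSuccEquiv R 1) ((bind₁ (![X 0 ^ m, X 1] : Fin 2 → MvPolynomial (Fin 2) R)) b) := congrArg _ hab
  rw [key_expand, key_expand] at this
  exact (finSuccEquiv R 1).injective (Polynomial.expand_injective hm this)

open MvPolynomial in
lemma core_contradiction {R : Type*} [CommRing R] [IsDomain R] {p : ℕ} (hp : p.Prime)
    {P Q : MvPolynomial (Fin 2) R} (hQ : Q ≠ 0)
    (h : X 0 * (bind₁ (![X 0 ^ p, X 1] : Fin 2 → MvPolynomial (Fin 2) R)) Q
        = (bind₁ (![X 0 ^ p, X 1] : Fin 2 → MvPolynomial (Fin 2) R)) P) : False := by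
  have h2 : (finSuccEquiv R 1) (X 0 * (bind₁ (![X 0 ^ p, X 1] : Fin 2 → MvPolynomial (Fin 2) R)) Q)
      = (finSuccEquiv R 1) ((bind₁ (![X 0 ^ p, X 1] : Fin 2 → MvPolynomial (Fin 2) R)) P) :=
    congrArg _ h
  rw [map_mul, finSuccEquiv_X_zero, key_expand, key_expand] at h2
  have hq' : (finSuccEquiv R 1) Q ≠ 0 := fun h0 => hQ (by
    have := congrArg (finSuccEquiv R 1).symm h0
    simpa using this)
  set q' := (finSuccEquiv R 1) Q with hq'def
  have hexp : Polynomial.expand (MvPolynomial (Fin 1) R) p q' ≠ 0 :=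
    fun h0 => hq' ((Polynomial.expand_eq_zero hp.pos).mp h0)
  have hdeg := congrArg Polynomial.natDegree h2
  rw [Polynomial.natDegree_mul Polynomial.X_ne_zero hexp, Polynomial.natDegree_X,
    Polynomial.natDegree_expand, Polynomial.natDegree_expand] at hdeg
  have hdvd : p ∣ 1 := by
    have h1 : ((finSuccEquiv R 1) P).natDegree * p - q'.natDegree * p = 1 := by omega
    exact h1 ▸ Nat.dvd_sub (dvd_mul_left p _) (dvd_mul_left p _)
  exact Nat.Prime.one_lt hp |>.ne' (Nat.dvd_one.mp hdvd)

open MvPolynomial in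
lemma theta_not_mem {K : Type*} [Field K] {p : ℕ} (hp : p.Prime) (k : Subfield K)
    {s θ : K} (hAI : AlgebraicIndependent ↥k ![θ, s]) (hθ0 : θ ≠ 0)
    (hmem : θ ∈ Subfield.closure (↑k ∪ {s, θ ^ p})) : False := by
  rw [Subfield.mem_closure_iff] at hmem
  obtain ⟨a, ha, b, hb, hdiv⟩ := hmem
  have hrange : Set.range (algebraMap ↥k K) = (↑k : Set K) :=
    Set.ext fun z => ⟨fun ⟨w, hw⟩ => hw ▸ w.2, fun hz => ⟨⟨z, hz⟩, rfl⟩⟩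
  have hring : Subring.closure ((↑k : Set K) ∪ {s, θ ^ p})
      = (Algebra.adjoin ↥k ({s, θ ^ p} : Set K)).toSubring := by
    rw [Algebra.adjoin_eq_ring_closure, hrange]
  have hsetr : ({s, θ ^ p} : Set K) = Set.range ![θ ^ p, s] := by
    ext z
    simp [Fin.exists_fin_two, or_comm, eq_comm]
  rw [hring] at ha hb
  rw [Subalgebra.mem_toSubring, hsetr, Algebra.adjoin_range_eq_range_aeval] at ha hb
  obtain ⟨P, hP⟩ := ha
  obtain ⟨Q, hQ⟩ := hb
  replace hP : aeval (![θ ^ p, s] : Fin 2 → K) P = a := hP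
  replace hQ : aeval (![θ ^ p, s] : Fin 2 → K) Q = b := hQ
  have hb0 : b ≠ 0 := by
    rintro rfl
    rw [div_zero] at hdiv
    exact hθ0 hdiv.symm
  have hQ0 : Q ≠ 0 := fun h0 => hb0 (by rw [← hQ, h0, map_zero])
  have heq : a = θ * b := (div_eq_iff hb0).mp hdiv
  have compat : ∀ T : MvPolynomial (Fin 2) ↥k,
      aeval (![θ ^ p, s] : Fin 2 → K) T
        = aeval (![θ, s] : Fin 2 → K) ((bind₁ (![X 0 ^ p, X 1] : Fin 2 → MvPolynomial (Fin 2) ↥k)) T) := by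
    have hfun : (fun i => aeval (![θ, s] : Fin 2 → K)
        ((![X 0 ^ p, X 1] : Fin 2 → MvPolynomial (Fin 2) ↥k) i)) = ![θ ^ p, s] := by
      funext i
      refine Fin.cases ?_ ?_ i
      · simp
      · intro j
        have hj : j = 0 := Subsingleton.elim _ _
        subst hj
        simp
    intro T
    rw [aeval_bind₁, hfun]
  have hrel : aeval (![θ, s] : Fin 2 → K)
        (X 0 * (bind₁ (![X 0 ^ p, X 1] : Fin 2 → MvPolynomial (Fin 2) ↥k)) Q)
      = aeval (![θ, s] : Fin 2 → K)
        ((bind₁ (![X 0 ^ p, X 1] : Fin 2 → MvPolynomial (Fin 2) ↥k)) P) := by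
    rw [map_mul, aeval_X, ← compat, ← compat, hP, hQ, heq]
    simp
  exact core_contradiction hp hQ0 (hAI hrel)

open MvPolynomial in
lemma ai_pair_transform {K : Type*} [Field K] (k : Subfield K)
    {x y : K} (halg : AlgebraicIndependent ↥k ![x, y])
    (m : ℕ) (hm : 0 < m) (w : Polynomial ↥k) :
    AlgebraicIndependent ↥k ![y ^ m, x + Polynomial.aeval y w] := by
  have hyx : AlgebraicIndependent ↥k ![y, x] := by
    have h := halg.comp ![1, 0] (by decide)
    have he : (![x, y] ∘ ![1, 0] : Fin 2 → K) = ![y, x] := by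
      funext i
      fin_cases i <;> rfl
    rwa [he] at h
  set h1 : Fin 2 → MvPolynomial (Fin 2) ↥k :=
    ![X 0, X 1 + Polynomial.aeval (X 0 : MvPolynomial (Fin 2) ↥k) w] with hh1
  set h1' : Fin 2 → MvPolynomial (Fin 2) ↥k :=
    ![X 0, X 1 - Polynomial.aeval (X 0 : MvPolynomial (Fin 2) ↥k) w] with hh1'
  set h2 : Fin 2 → MvPolynomial (Fin 2) ↥k := ![X 0 ^ m, X 1] with hh2
  set f : Fin 2 → MvPolynomial (Fin 2) ↥k :=
    ![X 0 ^ m, X 1 + Polynomial.aeval (X 0 : MvPolynomial (Fin 2) ↥k) w] with hf0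
  have hw1 : (bind₁ h1') (Polynomial.aeval (X 0 : MvPolynomial (Fin 2) ↥k) w)
      = Polynomial.aeval (X 0 : MvPolynomial (Fin 2) ↥k) w := by
    rw [← Polynomial.aeval_algHom_apply]
    simp [hh1']
  have hcomp : (bind₁ h1).comp (bind₁ h2) = bind₁ f := by
    rw [bind₁_comp_bind₁]
    congr 1
    funext i
    refine Fin.cases ?_ ?_ i
    · simp [hh1, hh2, hf0]
    · intro j
      have hj : j = 0 := Subsingleton.elim _ _
      subst hj
      simp [hh1, hh2, hf0]
  have hinj1 : Function.Injective (bind₁ h1) := by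
    have hli : (bind₁ h1').comp (bind₁ h1) = AlgHom.id ↥k (MvPolynomial (Fin 2) ↥k) := by
      rw [bind₁_comp_bind₁]
      have : (fun i => (bind₁ h1') (h1 i)) = (X : Fin 2 → MvPolynomial (Fin 2) ↥k) := by
        funext i
        refine Fin.cases ?_ ?_ i
        · simp [hh1, hh1']
        · intro j
          have hj : j = 0 := Subsingleton.elim _ _
          subst hj
          simp only [hh1, Fin.succ_zero_eq_one, Matrix.cons_val_one, Matrix.head_cons, map_add,
            bind₁_X_right, hw1, Matrix.cons_val_zero]
          show (X 1 - Polynomial.aeval (X 0 : MvPolynomial (Fin 2) ↥k) w)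
              + Polynomial.aeval (X 0 : MvPolynomial (Fin 2) ↥k) w = X 1
          ring
      rw [this, bind₁_X_left]
    intro u v huv
    have := congrArg (bind₁ h1') huv
    rwa [← AlgHom.comp_apply, ← AlgHom.comp_apply, hli, AlgHom.id_apply, AlgHom.id_apply] at this
  have hinj2 : Function.Injective (bind₁ h2) := bind1_pow_injective hm
  have hf : AlgebraicIndependent ↥k f := by
    rw [algebraicIndependent_iff_injective_aeval]
    show Function.Injective (bind₁ f)
    rw [← hcomp]
    intro u v huv
    exact hinj2 (hinj1 huv)
  have h2' := hyx.aeval_of_algebraicIndependent hf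
  have he2 : (fun i => aeval (![y, x] : Fin 2 → K) (f i)) = ![y ^ m, x + Polynomial.aeval y w] := by
    funext i
    refine Fin.cases ?_ ?_ i
    · simp [hf0]
    · intro j
      have hj : j = 0 := Subsingleton.elim _ _
      subst hj
      simp only [hf0, Fin.succ_zero_eq_one, Matrix.cons_val_one, Matrix.head_cons, map_add,
        aeval_X, Matrix.cons_val_zero]
      rw [← Polynomial.aeval_algHom_apply]
      simp
  rwa [he2] at h2'

lemma subfield_range_algebraMap {K : Type*} [Field K] (B : Subfield K) :
    Set.range (algebraMap ↥B K) = (↑B : Set K) :=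
  Set.ext fun z => ⟨fun ⟨w, hw⟩ => hw ▸ w.2, fun hz => ⟨⟨z, hz⟩, rfl⟩⟩

lemma finrank_adjoin_pth_root {K : Type*} [Field K] (p : ℕ) [hp : Fact p.Prime] [CharP K p]
    (F : Subfield K) {θ : K} (hθc : θ ^ p ∈ F) (hθ : θ ∉ F) :
    Module.finrank ↥F ↥(IntermediateField.adjoin ↥F ({θ} : Set K)) = p := by
  haveI : ExpChar K p := .prime hp.out
  set c : ↥F := ⟨θ ^ p, hθc⟩ with hc
  have hirr : Irreducible (Polynomial.X ^ p - Polynomial.C c) := by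
    apply X_pow_sub_C_irreducible_of_prime hp.out
    intro b hb
    apply hθ
    have hbK : (b : K) ^ p = θ ^ p := congrArg Subtype.val hb
    have hbθ : (b : K) = θ := by
      apply (frobenius K p).injective
      simpa [frobenius_def] using hbK
    exact hbθ ▸ b.2
  have hmonic := Polynomial.monic_X_pow_sub_C c hp.out.ne_zero
  have haev : Polynomial.aeval θ (Polynomial.X ^ p - Polynomial.C c) = 0 := by
    rw [map_sub, map_pow, Polynomial.aeval_X, Polynomial.aeval_C]
    exact sub_eq_zero.mpr rfl
  have hint : IsIntegral ↥F θ := ⟨_, hmonic, haev⟩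
  rw [IntermediateField.adjoin.finrank hint,
    ← minpoly.eq_of_irreducible_of_monic hirr haev hmonic]
  exact Polynomial.natDegree_X_pow_sub_C

lemma relrank_eq_p {K : Type*} [Field K] (p : ℕ) [hp : Fact p.Prime] [CharP K p]
    (B A : Subfield K) (hBA : B ≤ A) {θ : K} (hθc : θ ^ p ∈ B) (hθ : θ ∉ B)
    (hAe : A = Subfield.closure (↑B ∪ {θ})) : relrank B A = p := by
  letI := (Subfield.inclusion (le_sup_left : B ≤ B ⊔ A)).toAlgebra
  show Module.finrank ↥B ↥(B ⊔ A) = p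
  set E := IntermediateField.adjoin ↥B ({θ} : Set K) with hE
  have hET : E.toSubfield = A := by
    rw [hE, IntermediateField.adjoin_toSubfield, subfield_range_algebraMap, hAe]
  have hsup : B ⊔ A = A := sup_eq_right.mpr hBA
  have hmm : ∀ z : K, z ∈ B ⊔ A ↔ z ∈ E := by
    intro z
    rw [hsup, ← hET]
    exact Iff.rfl
  let e : ↥(B ⊔ A) ≃ₗ[↥B] ↥E :=
  { toFun := fun a => ⟨a.1, (hmm a.1).mp a.2⟩
    invFun := fun a => ⟨a.1, (hmm a.1).mpr a.2⟩
    left_inv := fun a => rfl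
    right_inv := fun a => rfl
    map_add' := fun _ _ => rfl
    map_smul' := fun c a => rfl }
  rw [e.finrank_eq]
  exact finrank_adjoin_pth_root p B hθc hθ

end Aux

/-- for `K = k(x,y)` over a perfect field `k` of characteristic `p` and
constants `A₁, A₂, … ∈ k`, the tower `W_n = k(x + A₁y^p + ⋯ + A_{n-1}y^{p^{n-1}}, y^{p^n})`
(with `W_0 = K`) is a power tower on `K` with `[W_{n-1} : W_n] = p` for all `n ≥ 1`:
an ∞-foliation of rank 1. -/
theorem stmt17 {K : Type*} [Field K] (p : ℕ) [Fact p.Prime] [CharP K p]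
    (k : Subfield K) (hperf : ∀ a ∈ k, ∃ b ∈ k, b ^ p = a)
    (x y : K) (halg : AlgebraicIndependent ↥k ![x, y])
    (hgen : Subfield.closure (↑k ∪ {x, y}) = ⊤)
    (A : ℕ → K) (hA : ∀ i, A i ∈ k)
    (W : ℕ → Subfield K) (hW0 : W 0 = ⊤)
    (hWn : ∀ n : ℕ, W (n + 1) =
      Subfield.closure
        (↑k ∪ {x + ∑ i ∈ Finset.range n, A (i + 1) * y ^ p ^ (i + 1), y ^ p ^ (n + 1)})) :
    IsPowerTower K p W ∧ ∀ n : ℕ, relrank (W (n + 1)) (W n) = p := by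
  classical
  have hp : p.Prime := Fact.out
  haveI : ExpChar K p := .prime hp
  set s : ℕ → K := fun n => x + ∑ i ∈ Finset.range n, A (i + 1) * y ^ p ^ (i + 1) with hs
  have hsdef : ∀ n, s n = x + ∑ i ∈ Finset.range n, A (i + 1) * y ^ p ^ (i + 1) :=
    fun n => by rw [hs]
  have hWn' : ∀ n : ℕ, W (n + 1) = Subfield.closure (↑k ∪ {s n, y ^ p ^ (n + 1)}) := hWn
  have hkW : ∀ n, k ≤ W n := by
    intro n
    cases n with
    | zero => rw [hW0]; exact le_top
    | succ m =>
      rw [hWn' m]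
      exact fun a ha => Subfield.subset_closure (Or.inl ha)
  have hsmem : ∀ n, s n ∈ W (n + 1) := by
    intro n; rw [hWn' n]; exact Subfield.subset_closure (Or.inr (Set.mem_insert _ _))
  have hymem : ∀ n, y ^ p ^ (n + 1) ∈ W (n + 1) := by
    intro n; rw [hWn' n]
    exact Subfield.subset_closure (Or.inr (Set.mem_insert_of_mem _ rfl))
  have hsplit : ∀ m n : ℕ, m ≤ n →
      s n = s m + ∑ i ∈ Finset.Ico m n, A (i + 1) * y ^ p ^ (i + 1) := by
    intro m n hmn
    rw [hsdef n, hsdef m, Finset.range_eq_Ico,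
      ← Finset.sum_Ico_consecutive (fun i => A (i + 1) * y ^ p ^ (i + 1)) (Nat.zero_le m) hmn,
      ← Finset.range_eq_Ico]
    ring
  have hdec : ∀ m n : ℕ, m ≤ n → W (n + 1) ≤ W (m + 1) := by
    intro m n hmn
    rw [hWn' n, Subfield.closure_le]
    rintro z (hz | hz)
    · exact hkW (m + 1) hz
    · simp only [Set.mem_insert_iff, Set.mem_singleton_iff] at hz
      rcases hz with rfl | rfl
      · rw [hsplit m n hmn]
        refine add_mem (hsmem m) (sum_mem fun i hi => ?_)
        have him : m ≤ i := (Finset.mem_Ico.mp hi).1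
        refine mul_mem (hkW (m + 1) (hA (i + 1))) ?_
        have he : (y ^ p ^ (m + 1)) ^ p ^ (i - m) = y ^ p ^ (i + 1) := by
          rw [← pow_mul, ← pow_add]
          congr 1
          congr 1
          omega
        exact he ▸ pow_mem (hymem m) _
      · have he : (y ^ p ^ (m + 1)) ^ p ^ (n - m) = y ^ p ^ (n + 1) := by
          rw [← pow_mul, ← pow_add]
          congr 1
          congr 1
          omega
        exact he ▸ pow_mem (hymem m) _
  have hWle : ∀ n, W (n + 1) ≤ W n := by
    intro n
    cases n with
    | zero => rw [hW0]; exact le_top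
    | succ m => exact hdec m (m + 1) (Nat.le_succ m)
  have hmempf : ∀ (n : ℕ) (z : K), z ∈ pfield K p n ↔ ∃ b : K, b ^ p ^ n = z := by
    intro n z
    exact Iff.rfl
  have hpf0 : pfield K p 0 = ⊤ := by
    ext z
    simp only [Subfield.mem_top, iff_true]
    exact (hmempf 0 z).mpr ⟨z, by simp⟩
  have hpfW : ∀ m : ℕ, pfield K p m ≤ W m := by
    intro m
    cases m with
    | zero => rw [hW0]; exact le_top
    | succ m =>
      intro z hz
      obtain ⟨b, rfl⟩ := (hmempf (m + 1) z).mp hz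
      have hET : (⊤ : Subfield K) ≤
          Subfield.comap (iterateFrobenius K p (m + 1)) (W (m + 1)) := by
        rw [← hgen, Subfield.closure_le]
        rintro z (hz | hz)
        · show iterateFrobenius K p (m + 1) z ∈ W (m + 1)
          rw [iterateFrobenius_def]
          exact pow_mem (hkW (m + 1) hz) _
        · simp only [Set.mem_insert_iff, Set.mem_singleton_iff] at hz
          rcases hz with rfl | rfl
          · show iterateFrobenius K p (m + 1) z ∈ W (m + 1)
            have hx : z = s m - ∑ i ∈ Finset.range m, A (i + 1) * y ^ p ^ (i + 1) := by
              rw [hsdef m]; ring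
            rw [hx, map_sub, map_sum]
            refine sub_mem ?_ (sum_mem fun i hi => ?_)
            · rw [iterateFrobenius_def]
              exact pow_mem (hsmem m) _
            · rw [map_mul]
              refine mul_mem ?_ ?_
              · rw [iterateFrobenius_def]
                exact hkW (m + 1) (pow_mem (hA (i + 1)) _)
              · rw [iterateFrobenius_def, ← pow_mul, mul_comm, pow_mul]
                exact pow_mem (hymem m) _
          · show iterateFrobenius K p (m + 1) z ∈ W (m + 1)
            rw [iterateFrobenius_def]
            exact hymem m
      have hb := hET (Subfield.mem_top b)
      rw [Subfield.mem_comap, iterateFrobenius_def] at hb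
      exact hb
  have htower : IsPowerTower K p W := by
    intro i j hij
    cases j with
    | zero => rw [hW0, hpf0, sup_top_eq]
    | succ m =>
      obtain ⟨d, rfl⟩ : ∃ d, i = m + d + 1 := ⟨i - (m + 1), by omega⟩
      have hmn : m ≤ m + d := Nat.le_add_right m d
      have hsupl : ∀ {z : K}, z ∈ W (m + d + 1) →
          z ∈ W (m + d + 1) ⊔ pfield K p (m + 1) :=
        fun hz => SetLike.le_def.mp le_sup_left hz
      have hsupr : ∀ {z : K}, z ∈ pfield K p (m + 1) →
          z ∈ W (m + d + 1) ⊔ pfield K p (m + 1) :=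
        fun hz => SetLike.le_def.mp le_sup_right hz
      apply le_antisymm
      · rw [hWn' m, Subfield.closure_le]
        rintro z (hz | hz)
        · exact hsupl (hkW (m + d + 1) hz)
        · simp only [Set.mem_insert_iff, Set.mem_singleton_iff] at hz
          rcases hz with rfl | rfl
          · have hsm : s m = s (m + d) - ∑ i ∈ Finset.Ico m (m + d),
                A (i + 1) * y ^ p ^ (i + 1) := by
              rw [hsplit m (m + d) hmn]; ring
            rw [hsm]
            refine sub_mem (hsupl (hsmem (m + d))) (sum_mem fun i hi => ?_)
            have him : m ≤ i := (Finset.mem_Ico.mp hi).1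
            refine mul_mem (hsupl (hkW (m + d + 1) (hA (i + 1)))) ?_
            refine hsupr ((hmempf (m + 1) _).mpr ⟨y ^ p ^ (i - m), ?_⟩)
            rw [← pow_mul, ← pow_add]
            congr 1
            congr 1
            omega
          · exact hsupr ((hmempf (m + 1) _).mpr ⟨y, rfl⟩)
      · exact sup_le (hdec m (m + d) hmn) (hpfW (m + 1))
  have hstep : ∀ n : ℕ, W n = Subfield.closure (↑(W (n + 1)) ∪ {y ^ p ^ n}) := by
    intro n
    cases n with
    | zero =>
      rw [hW0]
      apply le_antisymm _ le_top
      rw [← hgen, Subfield.closure_le]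
      rintro z (hz | hz)
      · exact Subfield.subset_closure (Or.inl (hkW 1 hz))
      · simp only [Set.mem_insert_iff, Set.mem_singleton_iff] at hz
        rcases hz with rfl | rfl
        · have hx0 : z = s 0 := by rw [hsdef 0]; simp
          rw [hx0]
          exact Subfield.subset_closure (Or.inl (hsmem 0))
        · exact Subfield.subset_closure (Or.inr (by simp : z ∈ ({z ^ p ^ 0} : Set K)))
    | succ m =>
      apply le_antisymm
      · rw [hWn' m, Subfield.closure_le]
        rintro z (hz | hz)
        · exact Subfield.subset_closure (Or.inl (hkW (m + 2) hz))
        · simp only [Set.mem_insert_iff, Set.mem_singleton_iff] at hz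
          rcases hz with rfl | rfl
          · have hsm : s m = s (m + 1) - A (m + 1) * y ^ p ^ (m + 1) := by
              rw [hsdef (m + 1), hsdef m, Finset.sum_range_succ]; ring
            rw [hsm]
            refine sub_mem (Subfield.subset_closure (Or.inl (hsmem (m + 1)))) ?_
            exact mul_mem (Subfield.subset_closure (Or.inl (hkW (m + 2) (hA (m + 1)))))
              (Subfield.subset_closure (Or.inr rfl))
          · exact Subfield.subset_closure (Or.inr rfl)
      · rw [Subfield.closure_le]
        rintro z (hz | hz)
        · exact hdec m (m + 1) (Nat.le_succ m) hz
        · simp only [Set.mem_singleton_iff] at hz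
          subst hz
          exact hymem m
  have hAI : ∀ n : ℕ, AlgebraicIndependent ↥k ![y ^ p ^ n, s n] := by
    intro n
    set w : Polynomial ↥k := ∑ i ∈ Finset.range n,
      Polynomial.C (⟨A (i + 1), hA (i + 1)⟩ : ↥k) * Polynomial.X ^ p ^ (i + 1) with hw
    have hthis := ai_pair_transform k halg (p ^ n) (pow_pos hp.pos n) w
    have hweval : Polynomial.aeval y w = ∑ i ∈ Finset.range n, A (i + 1) * y ^ p ^ (i + 1) := by
      rw [hw, map_sum]
      refine Finset.sum_congr rfl fun i hi => ?_
      rw [map_mul, Polynomial.aeval_C, map_pow, Polynomial.aeval_X]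
      rfl
    have hxs : x + Polynomial.aeval y w = s n := by rw [hweval, hsdef n]
    rwa [hxs] at hthis
  have hnotmem : ∀ n : ℕ, y ^ p ^ n ∉ W (n + 1) := by
    intro n hmem
    have hy0 : y ≠ 0 := by
      have := halg.ne_zero 1
      simpa using this
    apply theta_not_mem hp k (hAI n) (pow_ne_zero _ hy0)
    rw [hWn' n] at hmem
    have hpow : y ^ p ^ (n + 1) = (y ^ p ^ n) ^ p := by rw [← pow_mul, pow_succ]
    rwa [hpow] at hmem
  refine ⟨htower, fun n => ?_⟩
  have hθc : (y ^ p ^ n) ^ p ∈ W (n + 1) := by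
    have hpow : (y ^ p ^ n) ^ p = y ^ p ^ (n + 1) := by rw [← pow_mul, pow_succ]
    rw [hpow]
    exact hymem n
  exact relrank_eq_p p (W (n + 1)) (W n) (hWle n) hθc (hnotmem n) (hstep n)
end
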